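/- arXiv:1612.00928 — 9 statements merged into one kernel-verified Lean document; each statement's English description precedes it below -/
import Mathlib

section
/- (Theorem 1, informed truthfulness of CAH.) Fix m ≥ 3 tasks and n ≥ 1 signals with distributions P_k as in the setting. Suppose that for every task b the CAH delta matrix Δ_b is symmetric and every entry of Δ_b is nonzero. Then for all deterministic strategies F, G : Fin n → Fin n, E(𝕀,𝕀) ≥ E(F,G); and if F is a constant map (an uninformed strategy) then E(F,G) < E(𝕀,𝕀) for every G. -/
open Finset

/-- Counting ordered pairs of distinct indices, both different from `b`. -/
lemma cah_count_pairs {m : ℕ} (hm : 3 ≤ m) (b : Fin m) :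
    ∑ t' : Fin m, ∑ t'' : Fin m,
        (if t' ≠ t'' ∧ t' ≠ b ∧ t'' ≠ b then (1 : ℝ) else 0)
      = ((m : ℝ) - 1) * ((m : ℝ) - 2) := by
  have hinner : ∀ t' : Fin m, t' ≠ b →
      ∑ t'' : Fin m, (if t' ≠ t'' ∧ t' ≠ b ∧ t'' ≠ b then (1 : ℝ) else 0)
        = (m : ℝ) - 2 := by
    intro t' ht'
    have hpt : ∀ t'' : Fin m,
        (if t' ≠ t'' ∧ t' ≠ b ∧ t'' ≠ b then (1 : ℝ) else 0)
          = 1 - ((if t'' = t' then (1 : ℝ) else 0) + (if t'' = b then (1 : ℝ) else 0)) := by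
      intro t''
      by_cases h1 : t'' = t'
      · subst h1; simp [ht']
      · by_cases h2 : t'' = b
        · subst h2; simp [h1]
        · have h1' : t' ≠ t'' := fun h => h1 h.symm
          simp [h1', ht', h2, h1]
    rw [Finset.sum_congr rfl fun t'' _ => hpt t'']
    rw [Finset.sum_sub_distrib, Finset.sum_add_distrib, Finset.sum_ite_eq' univ t',
      Finset.sum_ite_eq' univ b, Finset.sum_const]
    simp
    ring
  have houter : ∀ t' : Fin m,
      (∑ t'' : Fin m, (if t' ≠ t'' ∧ t' ≠ b ∧ t'' ≠ b then (1 : ℝ) else 0))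
        = ((m : ℝ) - 2) - (if t' = b then ((m : ℝ) - 2) else 0) := by
    intro t'
    by_cases h : t' = b
    · subst h; simp
    · rw [hinner t' h]; simp [h]
  rw [Finset.sum_congr rfl fun t' _ => houter t']
  rw [Finset.sum_sub_distrib, Finset.sum_const, Finset.sum_ite_eq' univ b]
  simp
  ring

/-- A symmetric matrix with zero total sum and no zero entries has a column
containing both a positive and a negative entry. -/
lemma cah_mixed_column {n : ℕ} (hn : 1 ≤ n) (A : Fin n → Fin n → ℝ)
    (hsymm : ∀ i j, A i j = A j i) (hnz : ∀ i j, A i j ≠ 0)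
    (hsum : ∑ i, ∑ j, A i j = 0) :
    ∃ j ip iq, 0 < A ip j ∧ A iq j < 0 := by
  haveI : NeZero n := ⟨by omega⟩
  have hne : (univ : Finset (Fin n)).Nonempty := univ_nonempty
  have hpos : ∃ i j, 0 < A i j := by
    by_contra h
    push_neg at h
    have hlt : ∑ i, ∑ j, A i j < 0 := by
      refine Finset.sum_neg (fun i _ => ?_) hne
      refine Finset.sum_neg (fun j _ => ?_) hne
      exact lt_of_le_of_ne (h i j) (hnz i j)
    linarith
  have hneg : ∃ i j, A i j < 0 := by
    by_contra h
    push_neg at h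
    have hlt : 0 < ∑ i, ∑ j, A i j := by
      refine Finset.sum_pos (fun i _ => ?_) hne
      refine Finset.sum_pos (fun j _ => ?_) hne
      exact lt_of_le_of_ne (h i j) (Ne.symm (hnz i j))
    linarith
  obtain ⟨ip, jp, hp⟩ := hpos
  obtain ⟨iq, jq, hq⟩ := hneg
  by_contra hcon
  push_neg at hcon
  have h1 : 0 ≤ A jq jp := hcon jp ip jq hp
  have h1' : 0 < A jq jp := lt_of_le_of_ne h1 (Ne.symm (hnz jq jp))
  have h2 : 0 < A jp jq := by rw [hsymm]; exact h1'
  have h3 : 0 ≤ A iq jq := hcon jq jp iq h2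
  exact absurd hq (not_lt.mpr h3)

/-- Theorem 1: informed truthfulness of the CAH mechanism. -/
theorem cah_informed_truthful (m n : ℕ) (hm : 3 ≤ m) (hn : 1 ≤ n)
    (P : Fin m → Fin n → Fin n → ℝ)
    (hPnonneg : ∀ k i j, 0 ≤ P k i j)
    (hPsum : ∀ k, ∑ i, ∑ j, P k i j = 1)
    (margL : Fin m → Fin n → ℝ) (margR : Fin m → Fin n → ℝ)
    (hmargL : ∀ k i, margL k i = ∑ j, P k i j)
    (hmargR : ∀ k j, margR k j = ∑ i, P k i j)
    (Δ : Fin m → Fin n → Fin n → ℝ)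
    (hΔ : ∀ b i j, Δ b i j = P b i j -
      (1 / (((m : ℝ) - 1) * ((m : ℝ) - 2))) *
        ∑ t' : Fin m, ∑ t'' : Fin m,
          if t' ≠ t'' ∧ t' ≠ b ∧ t'' ≠ b then margL t' i * margR t'' j else 0)
    (S : Fin m → Fin n → Fin n → ℝ)
    (hS : ∀ b i j, S b i j = if 0 < Δ b i j then 1 else 0)
    (E : (Fin n → Fin n) → (Fin n → Fin n) → ℝ)
    (hE : ∀ F G, E F G =
      (1 / (m : ℝ)) * ∑ b, ∑ i, ∑ j, Δ b i j * S b (F i) (G j))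
    (hΔsymm : ∀ b i j, Δ b i j = Δ b j i)
    (hΔnz : ∀ b i j, Δ b i j ≠ 0) :
    (∀ F G : Fin n → Fin n, E F G ≤ E id id) ∧
    (∀ F G : Fin n → Fin n, (∃ r, ∀ i, F i = r) → E F G < E id id) := by
  have hmR : (3 : ℝ) ≤ (m : ℝ) := by exact_mod_cast hm
  have hmpos : 0 < 1 / (m : ℝ) := by
    apply one_div_pos.mpr; linarith
  -- truthful score equals positive part
  have hmax : ∀ b i j, Δ b i j * S b i j = max (Δ b i j) 0 := by
    intro b i j
    rw [hS]
    split_ifs with h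
    · rw [mul_one, max_eq_left h.le]
    · rw [mul_zero, max_eq_right (not_lt.mp h)]
  have hEid : E id id = (1 / (m : ℝ)) * ∑ b, ∑ i, ∑ j, max (Δ b i j) 0 := by
    rw [hE]
    congr 1
    exact Finset.sum_congr rfl fun b _ => Finset.sum_congr rfl fun i _ =>
      Finset.sum_congr rfl fun j _ => hmax b i j
  -- pointwise bound for any reports
  have hptle : ∀ b i j (x y : Fin n), Δ b i j * S b x y ≤ max (Δ b i j) 0 := by
    intro b i j x y
    rw [hS]
    split_ifs
    · rw [mul_one]; exact le_max_left _ _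
    · rw [mul_zero]; exact le_max_right _ _
  -- marginals sum to one
  have hL1 : ∀ k, ∑ i, margL k i = 1 := by
    intro k; simp only [hmargL]; exact hPsum k
  have hR1 : ∀ k, ∑ j, margR k j = 1 := by
    intro k; simp only [hmargR]; rw [Finset.sum_comm]; exact hPsum k
  -- total sum of each delta matrix is zero
  have hsum0 : ∀ b, ∑ i, ∑ j, Δ b i j = 0 := by
    intro b
    have hfact : ∀ t' t'' : Fin m,
        (∑ i, ∑ j, (if t' ≠ t'' ∧ t' ≠ b ∧ t'' ≠ b then margL t' i * margR t'' j else 0))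
          = (if t' ≠ t'' ∧ t' ≠ b ∧ t'' ≠ b then (1 : ℝ) else 0) := by
      intro t' t''
      by_cases h : t' ≠ t'' ∧ t' ≠ b ∧ t'' ≠ b
      · simp only [if_pos h]
        rw [← Finset.sum_mul_sum, hL1, hR1, one_mul]
      · simp [h]
    have hswap : (∑ i, ∑ j, ∑ t' : Fin m, ∑ t'' : Fin m,
          (if t' ≠ t'' ∧ t' ≠ b ∧ t'' ≠ b then margL t' i * margR t'' j else 0))
        = ∑ t' : Fin m, ∑ t'' : Fin m, ∑ i, ∑ j,
          (if t' ≠ t'' ∧ t' ≠ b ∧ t'' ≠ b then margL t' i * margR t'' j else 0) := by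
      calc (∑ i, ∑ j, ∑ t' : Fin m, ∑ t'' : Fin m,
              (if t' ≠ t'' ∧ t' ≠ b ∧ t'' ≠ b then margL t' i * margR t'' j else 0))
          = ∑ i, ∑ t' : Fin m, ∑ j, ∑ t'' : Fin m,
              (if t' ≠ t'' ∧ t' ≠ b ∧ t'' ≠ b then margL t' i * margR t'' j else 0) :=
            Finset.sum_congr rfl fun i _ => Finset.sum_comm
        _ = ∑ t' : Fin m, ∑ i, ∑ j, ∑ t'' : Fin m,
              (if t' ≠ t'' ∧ t' ≠ b ∧ t'' ≠ b then margL t' i * margR t'' j else 0) :=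
            Finset.sum_comm
        _ = ∑ t' : Fin m, ∑ i, ∑ t'' : Fin m, ∑ j,
              (if t' ≠ t'' ∧ t' ≠ b ∧ t'' ≠ b then margL t' i * margR t'' j else 0) :=
            Finset.sum_congr rfl fun t' _ => Finset.sum_congr rfl fun i _ => Finset.sum_comm
        _ = ∑ t' : Fin m, ∑ t'' : Fin m, ∑ i, ∑ j,
              (if t' ≠ t'' ∧ t' ≠ b ∧ t'' ≠ b then margL t' i * margR t'' j else 0) :=
            Finset.sum_congr rfl fun t' _ => Finset.sum_comm
    simp only [hΔ, Finset.sum_sub_distrib, ← Finset.mul_sum]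
    rw [hPsum b, hswap,
      Finset.sum_congr rfl fun t' _ => Finset.sum_congr rfl fun t'' _ => hfact t' t'',
      cah_count_pairs hm b]
    have hne1 : ((m : ℝ) - 1) * ((m : ℝ) - 2) ≠ 0 :=
      mul_ne_zero (by linarith) (by linarith)
    rw [one_div, inv_mul_cancel₀ hne1, sub_self]
  constructor
  · -- truthfulness
    intro F G
    rw [hE F G, hEid]
    apply mul_le_mul_of_nonneg_left _ hmpos.le
    exact Finset.sum_le_sum fun b _ => Finset.sum_le_sum fun i _ =>
      Finset.sum_le_sum fun j _ => hptle b i j (F i) (G j)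
  · -- strictness against uninformed strategies
    rintro F G ⟨r, hF⟩
    have hb0 : (0 : ℕ) < m := by omega
    set b₀ : Fin m := ⟨0, hb0⟩ with hb₀
    obtain ⟨j₀, ip, iq, hip, hiq⟩ :=
      cah_mixed_column hn (Δ b₀) (hΔsymm b₀) (hΔnz b₀) (hsum0 b₀)
    rw [hE F G, hEid]
    apply mul_lt_mul_of_pos_left _ hmpos
    refine Finset.sum_lt_sum
      (fun b _ => Finset.sum_le_sum fun i _ => Finset.sum_le_sum fun j _ =>
        hptle b i j (F i) (G j))
      ⟨b₀, Finset.mem_univ _, ?_⟩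
    simp only [hF]
    calc (∑ i, ∑ j, Δ b₀ i j * S b₀ r (G j))
        = ∑ j, ∑ i, Δ b₀ i j * S b₀ r (G j) := Finset.sum_comm
      _ = ∑ j, (∑ i, Δ b₀ i j) * S b₀ r (G j) :=
          Finset.sum_congr rfl fun j _ => (Finset.sum_mul _ _ _).symm
      _ < ∑ j, ∑ i, max (Δ b₀ i j) 0 := ?_
      _ = ∑ i, ∑ j, max (Δ b₀ i j) 0 := Finset.sum_comm
    refine Finset.sum_lt_sum (fun j _ => ?_) ⟨j₀, Finset.mem_univ _, ?_⟩
    · rw [hS]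
      split_ifs
      · rw [mul_one]
        exact Finset.sum_le_sum fun i _ => le_max_left _ _
      · rw [mul_zero]
        exact Finset.sum_nonneg fun i _ => le_max_right _ _
    · have h2 : ∑ i, Δ b₀ i j₀ < ∑ i, max (Δ b₀ i j₀) 0 :=
        Finset.sum_lt_sum (fun i _ => le_max_left _ _)
          ⟨iq, Finset.mem_univ _, lt_of_lt_of_le hiq (le_max_right _ _)⟩
      have h3 : 0 < ∑ i, max (Δ b₀ i j₀) 0 :=
        Finset.sum_pos' (fun i _ => le_max_right _ _)
          ⟨ip, Finset.mem_univ _, lt_of_lt_of_le hip (le_max_left _ _)⟩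
      rw [hS]
      split_ifs
      · rw [mul_one]; exact h2
      · rw [mul_zero]; exact h3
end

section
/- (Theorem 2, strong truthfulness of CAH.) Fix m ≥ 3 tasks and n ≥ 1 signals with distributions P_k as in the setting, and suppose Condition 1 holds: Δ_b(i,i) > 0 for every task b and every signal i, and Σ_{b ∈ Fin m} Δ_b(i,j) < 0 for all i ≠ j. Then for all deterministic strategies F, G : Fin n → Fin n, E(F,G) ≤ E(𝕀,𝕀), and if E(F,G) = E(𝕀,𝕀) then F = G and F is a bijection (a permutation strategy). -/
open Finset

lemma sum_eq_pointwise' {ι : Type*} [Fintype ι] {f g : ι → ℝ}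
    (hle : ∀ i, f i ≤ g i) (h : ∑ i, f i = ∑ i, g i) : ∀ i, f i = g i := fun i =>
  (Finset.sum_eq_sum_iff_of_le (fun i _ => hle i)).mp h i (Finset.mem_univ i)

/-- Theorem 2: strong truthfulness of the CAH mechanism under Condition 1. -/
theorem cah_strong_truthful (m n : ℕ) (hm : 3 ≤ m) (hn : 1 ≤ n)
    (P : Fin m → Fin n → Fin n → ℝ)
    (hPnonneg : ∀ k i j, 0 ≤ P k i j)
    (hPsum : ∀ k, ∑ i, ∑ j, P k i j = 1)
    (margL : Fin m → Fin n → ℝ) (margR : Fin m → Fin n → ℝ)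
    (hmargL : ∀ k i, margL k i = ∑ j, P k i j)
    (hmargR : ∀ k j, margR k j = ∑ i, P k i j)
    (Δ : Fin m → Fin n → Fin n → ℝ)
    (hΔ : ∀ b i j, Δ b i j = P b i j -
      (1 / (((m : ℝ) - 1) * ((m : ℝ) - 2))) *
        ∑ t' : Fin m, ∑ t'' : Fin m,
          if t' ≠ t'' ∧ t' ≠ b ∧ t'' ≠ b then margL t' i * margR t'' j else 0)
    (S : Fin m → Fin n → Fin n → ℝ)
    (hS : ∀ b i j, S b i j = if 0 < Δ b i j then 1 else 0)
    (E : (Fin n → Fin n) → (Fin n → Fin n) → ℝ)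
    (hE : ∀ F G, E F G =
      (1 / (m : ℝ)) * ∑ b, ∑ i, ∑ j, Δ b i j * S b (F i) (G j))
    (hdiag : ∀ b i, 0 < Δ b i i)
    (hoff : ∀ i j, i ≠ j → ∑ b, Δ b i j < 0) :
    ∀ F G : Fin n → Fin n,
      E F G ≤ E id id ∧ (E F G = E id id → F = G ∧ Function.Bijective F) := by
  intro F G
  have hm0 : (0:ℝ) < m := by
    have : 0 < m := by omega
    exact_mod_cast this
  have hS01 : ∀ b i j, 0 ≤ S b i j ∧ S b i j ≤ 1 := by
    intro b i j; rw [hS]; split <;> norm_num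
  have key : ∀ b i j, Δ b i j * S b (F i) (G j) ≤ Δ b i j * S b i j := by
    intro b i j
    obtain ⟨h0, h1⟩ := hS01 b (F i) (G j)
    rw [hS b i j]
    split
    · next h => nlinarith
    · next h =>
      push_neg at h
      rw [mul_zero]
      exact mul_nonpos_of_nonpos_of_nonneg h h0
  have hle : E F G ≤ E id id := by
    rw [hE, hE]
    refine mul_le_mul_of_nonneg_left ?_ (by positivity)
    refine Finset.sum_le_sum fun b _ => ?_
    refine Finset.sum_le_sum fun i _ => ?_
    exact Finset.sum_le_sum fun j _ => key b i j
  refine ⟨hle, fun heq => ?_⟩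
  -- extract pointwise equality
  have hsum : ∑ b, ∑ i, ∑ j, Δ b i j * S b (F i) (G j)
      = ∑ b, ∑ i, ∑ j, Δ b i j * S b i j := by
    rw [hE, hE] at heq
    simp only [id_eq] at heq
    have hne : (1 / (m:ℝ)) ≠ 0 := by positivity
    exact mul_left_cancel₀ hne heq
  have hpt : ∀ b i j, Δ b i j * S b (F i) (G j) = Δ b i j * S b i j := by
    intro b i j
    have h1 := sum_eq_pointwise'
      (f := fun b => ∑ i, ∑ j, Δ b i j * S b (F i) (G j))
      (g := fun b => ∑ i, ∑ j, Δ b i j * S b i j)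
      (fun b => Finset.sum_le_sum fun i _ => Finset.sum_le_sum fun j _ => key b i j)
      hsum b
    have h2 := sum_eq_pointwise'
      (f := fun i => ∑ j, Δ b i j * S b (F i) (G j))
      (g := fun i => ∑ j, Δ b i j * S b i j)
      (fun i => Finset.sum_le_sum fun j _ => key b i j) h1 i
    exact sum_eq_pointwise'
      (f := fun j => Δ b i j * S b (F i) (G j))
      (g := fun j => Δ b i j * S b i j)
      (fun j => key b i j) h2 j
  have hSeq1 : ∀ b i, 0 < Δ b (F i) (G i) := by
    intro b i
    have h := hpt b i i
    have hd := hdiag b i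
    rw [hS b i i, if_pos hd] at h
    have hs1 : S b (F i) (G i) = 1 := mul_left_cancel₀ (ne_of_gt hd) h
    rw [hS] at hs1
    by_contra hc
    push_neg at hc
    rw [if_neg (not_lt.mpr hc)] at hs1
    norm_num at hs1
  have hFG : F = G := by
    funext i
    by_contra hne
    have hlt := hoff (F i) (G i) hne
    have : Nonempty (Fin m) := ⟨⟨0, by omega⟩⟩
    have hpos : 0 < ∑ b, Δ b (F i) (G i) :=
      Finset.sum_pos (fun b _ => hSeq1 b i) Finset.univ_nonempty
    linarith
  have hinj : Function.Injective F := by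
    intro i i' hFi
    by_contra hne
    obtain ⟨b, hb⟩ : ∃ b, Δ b i i' < 0 := by
      by_contra hall
      push_neg at hall
      have : 0 ≤ ∑ b, Δ b i i' := Finset.sum_nonneg fun b _ => hall b
      exact absurd (hoff i i' hne) (not_lt.mpr this)
    have h := hpt b i i'
    rw [hS b i i', if_neg (not_lt.mpr hb.le), mul_zero, ← hFG, ← hFi,
      hS b (F i) (F i), if_pos (hdiag b (F i)), mul_one] at h
    linarith
  exact ⟨hFG, Finite.injective_iff_bijective.mp hinj⟩
end

section
/- Let Δ_b : Fin n → Fin n → ℝ for b ∈ Fin m be any family of real matrices satisfying Condition 1: Δ_b(i,i) > 0 for every b and i, and Σ_b Δ_b(i,j) < 0 for all i ≠ j. Let S_b(i,j) = 1 if Δ_b(i,j) > 0 and 0 otherwise, and E(F,G) = (1/m) Σ_b Σ_{i,j} Δ_b(i,j) · S_b(F(i),G(j)). If F, G : Fin n → Fin n are maps with F(i) ≠ G(i) for some i, then E(F,G) < E(𝕀,𝕀), where 𝕀 is the identity map. -/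
open Finset

/-- Asymmetric-strategies case in the proof of Theorem 2: under Condition 1,
any pair of strategies disagreeing on some signal is strictly worse than truth. -/
theorem cond1_asymmetric_strict (m n : ℕ) (hm : 1 ≤ m)
    (Δ : Fin m → Fin n → Fin n → ℝ)
    (hdiag : ∀ b i, 0 < Δ b i i)
    (hoff : ∀ i j, i ≠ j → ∑ b, Δ b i j < 0)
    (S : Fin m → Fin n → Fin n → ℝ)
    (hS : ∀ b i j, S b i j = if 0 < Δ b i j then 1 else 0)
    (E : (Fin n → Fin n) → (Fin n → Fin n) → ℝ)
    (hE : ∀ F G, E F G =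
      (1 / (m : ℝ)) * ∑ b, ∑ i, ∑ j, Δ b i j * S b (F i) (G j))
    (F G : Fin n → Fin n) (hFG : ∃ i, F i ≠ G i) :
    E F G < E id id := by
  obtain ⟨i0, hi0⟩ := hFG
  -- pointwise bound
  have key : ∀ b i j (u v : Fin n), Δ b i j * S b u v ≤ Δ b i j * S b i j := by
    intro b i j u v
    rw [hS, hS]
    by_cases h1 : 0 < Δ b i j
    · simp only [h1, if_true, mul_one]
      by_cases h2 : 0 < Δ b u v
      · simp [h2]
      · simp [h2]; positivity
    · simp only [h1, if_false, mul_zero]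
      by_cases h2 : 0 < Δ b u v
      · simp only [h2, if_true, mul_one]; linarith [not_lt.mp h1]
      · simp [h2]
  -- find b0 with S b0 (F i0) (G i0) = 0
  have hb0 : ∃ b0, ¬ (0 < Δ b0 (F i0) (G i0)) := by
    by_contra h
    push_neg at h
    have hpos : 0 < ∑ b, Δ b (F i0) (G i0) := by
      apply Finset.sum_pos (fun b _ => h b)
      exact Finset.univ_nonempty_iff.mpr (Fin.pos_iff_nonempty.mp hm)
    exact absurd (hoff _ _ hi0) (not_lt.mpr hpos.le)
  obtain ⟨b0, hb0⟩ := hb0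
  have hsum : (∑ b, ∑ i, ∑ j, Δ b i j * S b (F i) (G j)) <
      ∑ b, ∑ i, ∑ j, Δ b i j * S b i j := by
    apply Finset.sum_lt_sum
    · intro b _
      exact Finset.sum_le_sum fun i _ =>
        Finset.sum_le_sum fun j _ => key b i j (F i) (G j)
    · refine ⟨b0, Finset.mem_univ _, ?_⟩
      apply Finset.sum_lt_sum
      · intro i _
        exact Finset.sum_le_sum fun j _ => key b0 i j (F i) (G j)
      · refine ⟨i0, Finset.mem_univ _, ?_⟩
        apply Finset.sum_lt_sum
        · intro j _; exact key b0 i0 j (F i0) (G j)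
        · refine ⟨i0, Finset.mem_univ _, ?_⟩
          rw [hS, hS]
          simp only [hb0, if_false, mul_zero, hdiag b0 i0, if_true, mul_one]
  rw [hE, hE]
  have hmpos : (0:ℝ) < 1 / (m:ℝ) := by
    have : (0:ℝ) < m := by exact_mod_cast hm
    positivity
  simpa using (mul_lt_mul_of_pos_left hsum hmpos)
end

section
/- Let Δ_b : Fin n → Fin n → ℝ for b ∈ Fin m be any family of real matrices satisfying Condition 1: Δ_b(i,i) > 0 for every b and i, and Σ_b Δ_b(i,j) < 0 for all i ≠ j. Let S_b(i,j) = 1 if Δ_b(i,j) > 0 and 0 otherwise, and E(F,G) = (1/m) Σ_b Σ_{i,j} Δ_b(i,j) · S_b(F(i),G(j)). If F : Fin n → Fin n is not injective, then E(F,F) < E(𝕀,𝕀), where 𝕀 is the identity map. -/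
open Finset

/-- Symmetric non-permutation case in the proof of Theorem 2: under Condition 1,
a non-injective strategy played by both agents is strictly worse than truth. -/
theorem cond1_noninjective_strict (m n : ℕ) (hm : 1 ≤ m)
    (Δ : Fin m → Fin n → Fin n → ℝ)
    (hdiag : ∀ b i, 0 < Δ b i i)
    (hoff : ∀ i j, i ≠ j → ∑ b, Δ b i j < 0)
    (S : Fin m → Fin n → Fin n → ℝ)
    (hS : ∀ b i j, S b i j = if 0 < Δ b i j then 1 else 0)
    (E : (Fin n → Fin n) → (Fin n → Fin n) → ℝ)
    (hE : ∀ F G, E F G =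
      (1 / (m : ℝ)) * ∑ b, ∑ i, ∑ j, Δ b i j * S b (F i) (G j))
    (F : Fin n → Fin n) (hF : ¬ Function.Injective F) :
    E F F < E id id := by
  obtain ⟨i₀, j₀, hFij, hij⟩ : ∃ i j, F i = F j ∧ i ≠ j := by
    simp only [Function.Injective, not_forall] at hF
    obtain ⟨i, j, h1, h2⟩ := hF
    exact ⟨i, j, h1, h2⟩
  have hterm : ∀ b (i j : Fin n), Δ b i j * S b (F i) (F j) ≤ Δ b i j * S b i j := by
    intro b i j
    rw [hS, hS]
    by_cases h : 0 < Δ b i j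
    · simp only [h, if_true, mul_one]
      split_ifs with h2
      · simp
      · nlinarith
    · simp only [h, if_false, mul_zero]
      split_ifs with h2
      · nlinarith [not_lt.mp h]
      · simp
  have key : ∀ i j : Fin n,
      ∑ b, Δ b i j * S b (F i) (F j) ≤ ∑ b, Δ b i j * S b i j :=
    fun i j => Finset.sum_le_sum (fun b _ => hterm b i j)
  have hstrict : ∑ b, Δ b i₀ j₀ * S b (F i₀) (F j₀) < ∑ b, Δ b i₀ j₀ * S b i₀ j₀ := by
    have h1 : ∑ b, Δ b i₀ j₀ * S b (F i₀) (F j₀) = ∑ b, Δ b i₀ j₀ := by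
      apply Finset.sum_congr rfl
      intro b _
      rw [hFij, hS]
      simp [hdiag b (F j₀)]
    have h2 : (0:ℝ) ≤ ∑ b, Δ b i₀ j₀ * S b i₀ j₀ := by
      apply Finset.sum_nonneg
      intro b _
      rw [hS]
      split_ifs with h
      · nlinarith
      · simp
    calc ∑ b, Δ b i₀ j₀ * S b (F i₀) (F j₀) = ∑ b, Δ b i₀ j₀ := h1
      _ < 0 := hoff i₀ j₀ hij
      _ ≤ _ := h2
  rw [hE, hE]
  have hc : (0:ℝ) < 1 / (m:ℝ) := by
    have : (0:ℝ) < (m:ℝ) := by exact_mod_cast hm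
    positivity
  apply mul_lt_mul_of_pos_left _ hc
  have comm : ∀ T : Fin m → Fin n → Fin n → ℝ,
      ∑ b, ∑ i, ∑ j, T b i j = ∑ i, ∑ j, ∑ b, T b i j := by
    intro T
    rw [Finset.sum_comm]
    exact Finset.sum_congr rfl fun i _ => Finset.sum_comm
  rw [comm, comm]
  apply Finset.sum_lt_sum
  · intro i _
    exact Finset.sum_le_sum fun j _ => key i j
  · refine ⟨i₀, Finset.mem_univ _, ?_⟩
    apply Finset.sum_lt_sum
    · intro j _
      exact key i₀ j
    · exact ⟨j₀, Finset.mem_univ _, hstrict⟩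
end

section
/- (CCAH informed truthfulness.) Fix m ≥ 3, n ≥ 1, joint distributions P_b and P_{t',t''} (nonnegative entries summing to 1), and the CCAH delta matrices Δ_b(i,j) = P_b(i,j) − (1/((m−1)(m−2))) Σ_{t' ≠ t'', t' ≠ b, t'' ≠ b} P_{t',t''}(i,j), with score matrices S_b(i,j) = 1 if Δ_b(i,j) > 0 and 0 otherwise, and E(F,G) = (1/m) Σ_b Σ_{i,j} Δ_b(i,j) · S_b(F(i),G(j)). If every Δ_b is symmetric with all entries nonzero, then E(𝕀,𝕀) ≥ E(F,G) for all deterministic F, G : Fin n → Fin n, with strict inequality whenever F is a constant map. -/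
open Finset

/-- Informed truthfulness of the CCAH mechanism. -/
theorem ccah_informed_truthful (m n : ℕ) (hm : 3 ≤ m) (hn : 1 ≤ n)
    (P : Fin m → Fin n → Fin n → ℝ)
    (hPnonneg : ∀ k i j, 0 ≤ P k i j)
    (hPsum : ∀ k, ∑ i, ∑ j, P k i j = 1)
    (Ppair : Fin m → Fin m → Fin n → Fin n → ℝ)
    (hPpairnonneg : ∀ t' t'', t' ≠ t'' → ∀ i j, 0 ≤ Ppair t' t'' i j)
    (hPpairsum : ∀ t' t'', t' ≠ t'' → ∑ i, ∑ j, Ppair t' t'' i j = 1)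
    (Δ : Fin m → Fin n → Fin n → ℝ)
    (hΔ : ∀ b i j, Δ b i j = P b i j -
      (1 / (((m : ℝ) - 1) * ((m : ℝ) - 2))) *
        ∑ t' : Fin m, ∑ t'' : Fin m,
          if t' ≠ t'' ∧ t' ≠ b ∧ t'' ≠ b then Ppair t' t'' i j else 0)
    (S : Fin m → Fin n → Fin n → ℝ)
    (hS : ∀ b i j, S b i j = if 0 < Δ b i j then 1 else 0)
    (E : (Fin n → Fin n) → (Fin n → Fin n) → ℝ)
    (hE : ∀ F G, E F G =
      (1 / (m : ℝ)) * ∑ b, ∑ i, ∑ j, Δ b i j * S b (F i) (G j))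
    (hΔsymm : ∀ b i j, Δ b i j = Δ b j i)
    (hΔnz : ∀ b i j, Δ b i j ≠ 0) :
    (∀ F G : Fin n → Fin n, E F G ≤ E id id) ∧
    (∀ F G : Fin n → Fin n, (∃ r, ∀ i, F i = r) → E F G < E id id) := by
  have hmR : (3:ℝ) ≤ (m:ℝ) := by exact_mod_cast hm
  have hNm : Nonempty (Fin m) := ⟨⟨0, by omega⟩⟩
  have hNn : Nonempty (Fin n) := ⟨⟨0, hn⟩⟩
  -- the count of valid pairs
  have hcount : ∀ b : Fin m, (∑ t' : Fin m, ∑ t'' : Fin m,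
      (if t' ≠ t'' ∧ t' ≠ b ∧ t'' ≠ b then (1:ℝ) else 0))
      = ((m:ℝ) - 1) * ((m:ℝ) - 2) := by
    intro b
    have hinner : ∀ t' : Fin m, (∑ t'' : Fin m,
        (if t' ≠ t'' ∧ t' ≠ b ∧ t'' ≠ b then (1:ℝ) else 0))
        = if t' ≠ b then ((m:ℝ) - 2) else 0 := by
      intro t'
      by_cases ht : t' ≠ b
      · rw [if_pos ht]
        have : ∀ t'' : Fin m, (if t' ≠ t'' ∧ t' ≠ b ∧ t'' ≠ b then (1:ℝ) else 0)
            = if t'' ∈ (Finset.univ \ {t', b} : Finset (Fin m)) then (1:ℝ) else 0 := by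
          intro t''
          have hiff : (t' ≠ t'' ∧ t' ≠ b ∧ t'' ≠ b) ↔
              t'' ∈ (Finset.univ \ {t', b} : Finset (Fin m)) := by
            simp only [Finset.mem_sdiff, Finset.mem_univ, true_and, Finset.mem_insert,
              Finset.mem_singleton]
            constructor
            · rintro ⟨h1, _, h3⟩; push_neg; exact ⟨fun h => h1 h.symm, h3⟩
            · intro h; push_neg at h; exact ⟨fun h' => h.1 h'.symm, ht, h.2⟩
          exact if_congr hiff rfl rfl
        rw [Finset.sum_congr rfl (fun t'' _ => this t'')]
        rw [Finset.sum_ite_mem, Finset.univ_inter, Finset.sum_const]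
        have hcard : (Finset.univ \ {t', b} : Finset (Fin m)).card = m - 2 := by
          rw [Finset.card_sdiff_of_subset (Finset.subset_univ _)]
          simp [Finset.card_insert_of_notMem, Finset.mem_singleton, ht]
        rw [hcard]
        have : ((m - 2 : ℕ) : ℝ) = (m:ℝ) - 2 := by
          have : (2:ℕ) ≤ m := by omega
          push_cast [Nat.cast_sub this]
          ring
        simp [this]
      · rw [if_neg ht]
        push_neg at ht
        apply Finset.sum_eq_zero
        intro t'' _
        rw [if_neg]
        rintro ⟨_, h2, _⟩
        exact h2 ht
    rw [Finset.sum_congr rfl (fun t' _ => hinner t')]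
    rw [Finset.sum_ite, Finset.sum_const, Finset.sum_const_zero, add_zero]
    have hcard : (Finset.univ.filter (fun t' : Fin m => t' ≠ b)).card = m - 1 := by
      rw [Finset.filter_ne' Finset.univ b, Finset.card_erase_of_mem (Finset.mem_univ b)]
      simp
    rw [hcard]
    have : ((m - 1 : ℕ) : ℝ) = (m:ℝ) - 1 := by
      have : (1:ℕ) ≤ m := by omega
      push_cast [Nat.cast_sub this]
      ring
    rw [nsmul_eq_mul, this]
  -- each Δ b sums to zero
  have hzero : ∀ b, ∑ i, ∑ j, Δ b i j = 0 := by
    intro b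
    have hD : ((m:ℝ) - 1) * ((m:ℝ) - 2) ≠ 0 := by nlinarith
    have key : ∑ i, ∑ j, ∑ t' : Fin m, ∑ t'' : Fin m,
        (if t' ≠ t'' ∧ t' ≠ b ∧ t'' ≠ b then Ppair t' t'' i j else 0)
        = ((m:ℝ) - 1) * ((m:ℝ) - 2) := by
      have swap1 : ∀ i : Fin n, ∑ j, ∑ t' : Fin m, ∑ t'' : Fin m,
          (if t' ≠ t'' ∧ t' ≠ b ∧ t'' ≠ b then Ppair t' t'' i j else 0)
          = ∑ t' : Fin m, ∑ t'' : Fin m, ∑ j,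
          (if t' ≠ t'' ∧ t' ≠ b ∧ t'' ≠ b then Ppair t' t'' i j else 0) := by
        intro i
        rw [Finset.sum_comm]
        exact Finset.sum_congr rfl fun t' _ => Finset.sum_comm
      rw [Finset.sum_congr rfl (fun i _ => swap1 i), Finset.sum_comm]
      have swap2 : ∑ t' : Fin m, ∑ i, ∑ t'' : Fin m, ∑ j,
          (if t' ≠ t'' ∧ t' ≠ b ∧ t'' ≠ b then Ppair t' t'' i j else 0)
          = ∑ t' : Fin m, ∑ t'' : Fin m, ∑ i, ∑ j,
          (if t' ≠ t'' ∧ t' ≠ b ∧ t'' ≠ b then Ppair t' t'' i j else 0) :=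
        Finset.sum_congr rfl fun t' _ => Finset.sum_comm
      rw [swap2]
      rw [← hcount b]
      apply Finset.sum_congr rfl
      intro t' _
      apply Finset.sum_congr rfl
      intro t'' _
      by_cases h : t' ≠ t'' ∧ t' ≠ b ∧ t'' ≠ b
      · simp only [if_pos h, hPpairsum t' t'' h.1]
      · simp only [if_neg h, Finset.sum_const_zero]
    have : ∑ i, ∑ j, Δ b i j = (∑ i, ∑ j, P b i j) -
        (1 / (((m:ℝ) - 1) * ((m:ℝ) - 2))) * ∑ i, ∑ j, ∑ t' : Fin m, ∑ t'' : Fin m,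
          (if t' ≠ t'' ∧ t' ≠ b ∧ t'' ≠ b then Ppair t' t'' i j else 0) := by
      simp only [hΔ, Finset.sum_sub_distrib, Finset.mul_sum]
    rw [this, hPsum b, key]
    field_simp
    rw [div_self hD, sub_self]
  -- basic facts about S
  have hterm : ∀ b i j x y, Δ b i j * S b x y ≤ max (Δ b i j) 0 := by
    intro b i j x y
    rw [hS]
    split
    · rw [mul_one]; exact le_max_left _ _
    · rw [mul_zero]; exact le_max_right _ _
  have hEid : E id id = (1 / (m:ℝ)) * ∑ b, ∑ i, ∑ j, max (Δ b i j) 0 := by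
    rw [hE]
    congr 1
    apply Finset.sum_congr rfl; intro b _
    apply Finset.sum_congr rfl; intro i _
    apply Finset.sum_congr rfl; intro j _
    simp only [id]
    rw [hS]
    split
    · rename_i h; rw [mul_one, max_eq_left h.le]
    · rename_i h; rw [mul_zero, max_eq_right (not_lt.mp h)]
  have hminv : (0:ℝ) < 1 / (m:ℝ) := by positivity
  constructor
  · intro F G
    rw [hE, hEid]
    apply mul_le_mul_of_nonneg_left _ hminv.le
    apply Finset.sum_le_sum; intro b _
    apply Finset.sum_le_sum; intro i _
    apply Finset.sum_le_sum; intro j _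
    exact hterm b i j (F i) (G j)
  · rintro F G ⟨r, hr⟩
    rw [hE, hEid]
    apply mul_lt_mul_of_pos_left _ hminv
    apply Finset.sum_lt_sum_of_nonempty Finset.univ_nonempty
    intro b _
    -- find a mixed column
    have hmix : ∃ j0 : Fin n, (∃ i1, 0 < Δ b i1 j0) ∧ (∃ i2, Δ b i2 j0 < 0) := by
      by_contra hcon
      push_neg at hcon
      have hcol : ∀ j0 : Fin n, (∀ i, 0 < Δ b i j0) ∨ (∀ i, Δ b i j0 < 0) := by
        intro j0
        by_cases h : ∃ i1, 0 < Δ b i1 j0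
        · left
          intro i
          have h0 := hcon j0 h i
          exact lt_of_le_of_ne h0 (Ne.symm (hΔnz b i j0))
        · right
          push_neg at h
          intro i
          exact lt_of_le_of_ne (h i) (hΔnz b i j0)
      have hcsum : ∑ j, ∑ i, Δ b i j = 0 := by
        rw [Finset.sum_comm]; exact hzero b
      have hcases : ∀ j : Fin n, 0 < ∑ i, Δ b i j ∨ ∑ i, Δ b i j < 0 := by
        intro j
        rcases hcol j with h | h
        · left; exact Finset.sum_pos (fun i _ => h i) Finset.univ_nonempty
        · right
          have := Finset.sum_lt_sum_of_nonempty (Finset.univ_nonempty (α := Fin n))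
            (f := fun i => Δ b i j) (g := fun _ => (0:ℝ)) (fun i _ => h i)
          simpa using this
      have hjp : ∃ jp : Fin n, 0 < ∑ i, Δ b i jp := by
        by_contra h
        push_neg at h
        have hall : ∀ j : Fin n, ∑ i, Δ b i j < 0 := fun j =>
          (hcases j).resolve_left (not_lt.mpr (h j))
        have := Finset.sum_lt_sum_of_nonempty (Finset.univ_nonempty (α := Fin n))
          (f := fun j => ∑ i, Δ b i j) (g := fun _ => (0:ℝ)) (fun j _ => hall j)
        simp only [Finset.sum_const_zero] at this
        linarith [hcsum]
      have hjn : ∃ jn : Fin n, ∑ i, Δ b i jn < 0 := by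
        by_contra h
        push_neg at h
        have hall : ∀ j : Fin n, 0 < ∑ i, Δ b i j := fun j =>
          (hcases j).resolve_right (not_lt.mpr (h j))
        have := Finset.sum_pos (fun j (_ : j ∈ Finset.univ) => hall j) Finset.univ_nonempty
        linarith [hcsum]
      obtain ⟨jp, hjp⟩ := hjp
      obtain ⟨jn, hjn⟩ := hjn
      have hp : ∀ i, 0 < Δ b i jp := by
        rcases hcol jp with h | h
        · exact h
        · exfalso
          have := Finset.sum_lt_sum_of_nonempty (Finset.univ_nonempty (α := Fin n))
            (f := fun i => Δ b i jp) (g := fun _ => (0:ℝ)) (fun i _ => h i)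
          simp only [Finset.sum_const_zero] at this
          linarith
      have hnn : ∀ i, Δ b i jn < 0 := by
        rcases hcol jn with h | h
        · exfalso
          have := Finset.sum_pos (fun i (_ : i ∈ Finset.univ) => h i) Finset.univ_nonempty
          linarith
        · exact h
      have h1 : 0 < Δ b jn jp := hp jn
      have h2 : Δ b jp jn < 0 := hnn jp
      rw [hΔsymm b jn jp] at h1
      linarith
    obtain ⟨j0, ⟨i1, hpos⟩, ⟨i2, hneg⟩⟩ := hmix
    -- the strict inequality for this b
    simp only [hr]
    rw [Finset.sum_comm]
    rw [show (∑ i, ∑ j, max (Δ b i j) 0) = ∑ j, ∑ i, max (Δ b i j) 0 from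
      Finset.sum_comm]
    apply Finset.sum_lt_sum
    · intro j _
      apply Finset.sum_le_sum
      intro i _
      exact hterm b i j r (G j)
    · refine ⟨j0, Finset.mem_univ _, ?_⟩
      have hSval : S b r (G j0) = 0 ∨ S b r (G j0) = 1 := by
        rw [hS]; split
        · right; rfl
        · left; rfl
      rcases hSval with hs | hs
      · rw [hs]
        simp only [mul_zero, Finset.sum_const_zero]
        apply Finset.sum_pos'
        · intro i _; exact le_max_right _ _
        · exact ⟨i1, Finset.mem_univ _, by rw [max_eq_left hpos.le]; exact hpos⟩
      · rw [hs]
        simp only [mul_one]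
        apply Finset.sum_lt_sum
        · intro i _; exact le_max_left _ _
        · exact ⟨i2, Finset.mem_univ _, by rw [max_eq_right hneg.le]; exact hneg⟩
end

section
/- (CCAH strong truthfulness.) Fix m ≥ 3, n ≥ 1, joint distributions P_b and P_{t',t''} (nonnegative entries summing to 1), and the CCAH delta matrices Δ_b(i,j) = P_b(i,j) − (1/((m−1)(m−2))) Σ_{t' ≠ t'', t' ≠ b, t'' ≠ b} P_{t',t''}(i,j), with S_b(i,j) = 1 if Δ_b(i,j) > 0 and 0 otherwise, and E(F,G) = (1/m) Σ_b Σ_{i,j} Δ_b(i,j) · S_b(F(i),G(j)). If Condition 1 holds (Δ_b(i,i) > 0 for all b, i, and Σ_b Δ_b(i,j) < 0 for all i ≠ j), then E(F,G) ≤ E(𝕀,𝕀) for all deterministic F, G, with equality only if F = G and F is a bijection. -/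
open Finset

/-- Strong truthfulness of the CCAH mechanism under Condition 1. -/
theorem ccah_strong_truthful (m n : ℕ) (hm : 3 ≤ m) (hn : 1 ≤ n)
    (P : Fin m → Fin n → Fin n → ℝ)
    (hPnonneg : ∀ k i j, 0 ≤ P k i j)
    (hPsum : ∀ k, ∑ i, ∑ j, P k i j = 1)
    (Ppair : Fin m → Fin m → Fin n → Fin n → ℝ)
    (hPpairnonneg : ∀ t' t'', t' ≠ t'' → ∀ i j, 0 ≤ Ppair t' t'' i j)
    (hPpairsum : ∀ t' t'', t' ≠ t'' → ∑ i, ∑ j, Ppair t' t'' i j = 1)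
    (Δ : Fin m → Fin n → Fin n → ℝ)
    (hΔ : ∀ b i j, Δ b i j = P b i j -
      (1 / (((m : ℝ) - 1) * ((m : ℝ) - 2))) *
        ∑ t' : Fin m, ∑ t'' : Fin m,
          if t' ≠ t'' ∧ t' ≠ b ∧ t'' ≠ b then Ppair t' t'' i j else 0)
    (S : Fin m → Fin n → Fin n → ℝ)
    (hS : ∀ b i j, S b i j = if 0 < Δ b i j then 1 else 0)
    (E : (Fin n → Fin n) → (Fin n → Fin n) → ℝ)
    (hE : ∀ F G, E F G =
      (1 / (m : ℝ)) * ∑ b, ∑ i, ∑ j, Δ b i j * S b (F i) (G j))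
    (hdiag : ∀ b i, 0 < Δ b i i)
    (hoff : ∀ i j, i ≠ j → ∑ b, Δ b i j < 0) :
    ∀ F G : Fin n → Fin n,
      E F G ≤ E id id ∧ (E F G = E id id → F = G ∧ Function.Bijective F) := by

  intro F G
  have hm3 : (3:ℝ) ≤ (m:ℝ) := by exact_mod_cast hm
  have hm1 : (0:ℝ) < 1/(m:ℝ) := by positivity
  -- pointwise key inequality
  have key : ∀ (F G : Fin n → Fin n) (b : Fin m) (i j : Fin n),
      Δ b i j * S b (F i) (G j) ≤ Δ b i j * S b i j := by
    intro F G b i j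
    rw [hS, hS]
    by_cases h : 0 < Δ b i j
    · rw [if_pos h]
      split
      · simp
      · nlinarith [h.le]
    · rw [if_neg h]
      push_neg at h
      split
      · nlinarith
      · simp
  have hflat : ∀ (F G : Fin n → Fin n),
      E F G = (1/(m:ℝ)) * ∑ p : Fin m × Fin n × Fin n,
        Δ p.1 p.2.1 p.2.2 * S p.1 (F p.2.1) (G p.2.2) := by
    intro F G
    rw [hE]
    congr 1
    rw [Fintype.sum_prod_type]
    refine Finset.sum_congr rfl fun b _ => ?_
    rw [Fintype.sum_prod_type]
  have hle : ∀ p : Fin m × Fin n × Fin n, p ∈ (univ : Finset (Fin m × Fin n × Fin n)) →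
      Δ p.1 p.2.1 p.2.2 * S p.1 (F p.2.1) (G p.2.2) ≤
      Δ p.1 p.2.1 p.2.2 * S p.1 p.2.1 p.2.2 :=
    fun p _ => key F G p.1 p.2.1 p.2.2
  constructor
  · rw [hflat F G, hflat id id]
    exact mul_le_mul_of_nonneg_left (Finset.sum_le_sum hle) hm1.le
  · intro heq
    rw [hflat F G, hflat id id] at heq
    have hsum : ∑ p : Fin m × Fin n × Fin n,
        Δ p.1 p.2.1 p.2.2 * S p.1 (F p.2.1) (G p.2.2) =
        ∑ p : Fin m × Fin n × Fin n, Δ p.1 p.2.1 p.2.2 * S p.1 p.2.1 p.2.2 :=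
      mul_left_cancel₀ (ne_of_gt hm1) heq
    have hterm : ∀ (b : Fin m) (i j : Fin n),
        Δ b i j * S b (F i) (G j) = Δ b i j * S b i j := by
      intro b i j
      exact (Finset.sum_eq_sum_iff_of_le hle).mp hsum (b, i, j) (Finset.mem_univ _)
    have hunivm : (univ : Finset (Fin m)).Nonempty := ⟨⟨0, by omega⟩, Finset.mem_univ _⟩
    have hSFG : ∀ (i : Fin n) (b : Fin m), 0 < Δ b (F i) (G i) := by
      intro i b
      have h := hterm b i i
      rw [hS, hS, if_pos (hdiag b i), mul_one] at h
      by_contra hc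
      rw [if_neg hc, mul_zero] at h
      exact absurd h (ne_of_gt (hdiag b i)).symm
    have hFG : F = G := by
      funext i
      by_contra hne
      have h1 := hoff (F i) (G i) hne
      have h2 : 0 < ∑ b, Δ b (F i) (G i) :=
        Finset.sum_pos (fun b _ => hSFG i b) hunivm
      linarith
    subst hFG
    refine ⟨rfl, ?_⟩
    have hinj : Function.Injective F := by
      intro i i' hFii'
      by_contra hne
      have hge : ∀ b : Fin m, 0 ≤ Δ b i i' := by
        intro b
        have h := hterm b i i'
        rw [hS, hS] at h
        have hpos : 0 < Δ b (F i) (F i') := by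
          rw [hFii']; exact hdiag b (F i')
        rw [if_pos hpos, mul_one] at h
        by_cases hc : 0 < Δ b i i'
        · exact hc.le
        · rw [if_neg hc, mul_zero] at h
          exact le_of_eq h.symm
      have h1 := hoff i i' hne
      have h2 : 0 ≤ ∑ b, Δ b i i' := Finset.sum_nonneg (fun b _ => hge b)
      linarith
    exact Finite.injective_iff_bijective.mp hinj
end

section
/- Let Δ_b, Δ̂_b : Fin n → Fin n → ℝ, b ∈ Fin m, be two families of real matrices, and let S_b(i,j) = 1 if Δ_b(i,j) > 0 else 0, Ŝ_b(i,j) = 1 if Δ̂_b(i,j) > 0 else 0 be their sign matrices. Then |(1/m) Σ_b Σ_{i,j} Δ_b(i,j) · (Ŝ_b(i,j) − S_b(i,j))| ≤ (1/m) Σ_b Σ_{i,j} |Δ̂_b(i,j) − Δ_b(i,j)|. -/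
open Finset

lemma pointwise_sign_bound (d dh : ℝ) :
    |d * ((if 0 < dh then (1:ℝ) else 0) - (if 0 < d then 1 else 0))| ≤ |dh - d| := by
  by_cases h1 : 0 < d <;> by_cases h2 : 0 < dh <;> simp [h1, h2, abs_sub_comm]
  · rw [abs_of_pos h1, abs_of_nonneg (by push_neg at h2; linarith)]; linarith
  · push_neg at h1
    rw [abs_of_nonpos h1, abs_of_neg (by linarith : d - dh < 0)]; linarith

/-- The change in truthful expected score from replacing the true sign matrices with
estimated sign matrices is bounded by the ℓ¹ error of the estimated delta matrices. -/
theorem sign_matrix_error_bound (m n : ℕ)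
    (Δ Δhat : Fin m → Fin n → Fin n → ℝ)
    (S : Fin m → Fin n → Fin n → ℝ)
    (hS : ∀ b i j, S b i j = if 0 < Δ b i j then 1 else 0)
    (Shat : Fin m → Fin n → Fin n → ℝ)
    (hShat : ∀ b i j, Shat b i j = if 0 < Δhat b i j then 1 else 0) :
    |(1 / (m : ℝ)) * ∑ b, ∑ i, ∑ j, Δ b i j * (Shat b i j - S b i j)| ≤
    (1 / (m : ℝ)) * ∑ b, ∑ i, ∑ j, |Δhat b i j - Δ b i j| := by
  rw [abs_mul, abs_of_nonneg (by positivity : (0:ℝ) ≤ 1 / m)]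
  gcongr
  calc |∑ b, ∑ i, ∑ j, Δ b i j * (Shat b i j - S b i j)|
      ≤ ∑ b, ∑ i, ∑ j, |Δ b i j * (Shat b i j - S b i j)| := by
        refine (abs_sum_le_sum_abs _ _).trans ?_
        gcongr with b _
        refine (abs_sum_le_sum_abs _ _).trans ?_
        gcongr with i _
        exact abs_sum_le_sum_abs _ _
    _ ≤ ∑ b, ∑ i, ∑ j, |Δhat b i j - Δ b i j| := by
        refine sum_le_sum fun b _ => sum_le_sum fun i _ => sum_le_sum fun j _ => ?_
        rw [hS, hShat]
        exact pointwise_sign_bound _ _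
end

section
/- Fix m ≥ 3, n ≥ 1 and ε > 0. Let P_b, T_b : Fin n → Fin n → ℝ (true and estimated joint distributions) with marginals P_b(i) = Σ_j P_b(i,j), P_b'(j) = Σ_i P_b(i,j) and similarly for T_b, where all P_b(i) and all T_b'(j) are nonnegative and Σ_i P_b(i) = Σ_j T_b'(j) = 1 for every b. Define Δ_b(i,j) = P_b(i,j) − (1/((m−1)(m−2))) Σ_{t' ≠ t'', t' ≠ b, t'' ≠ b} P_{t'}(i)·P_{t''}'(j) and Δ̂_b analogously from the T's. If for every b, Σ_{i,j} |P_b(i,j) − T_b(i,j)| ≤ ε/3, Σ_i |P_b(i) − T_b(i)| ≤ ε/3, and Σ_j |P_b'(j) − T_b'(j)| ≤ ε/3, then (1/m) Σ_b Σ_{i,j} |Δ̂_b(i,j) − Δ_b(i,j)| ≤ ε. -/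
open Finset

lemma abs_prod_sub' (a b c d : ℝ) (hb : 0 ≤ b) (hc : 0 ≤ c) :
    |a * b - c * d| ≤ |a - c| * b + c * |b - d| := by
  have h : a * b - c * d = (a - c) * b + c * (b - d) := by ring
  rw [h]
  calc |(a - c) * b + c * (b - d)| ≤ |(a - c) * b| + |c * (b - d)| := abs_add_le _ _
    _ = |a - c| * b + c * |b - d| := by
        rw [abs_mul, abs_mul, abs_of_nonneg hb, abs_of_nonneg hc]

lemma sum_swap4 {α β : Type*} [Fintype α] [Fintype β] (g : β → β → α → α → ℝ) :
    ∑ i : β, ∑ j : β, ∑ t' : α, ∑ t'' : α, g i j t' t''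
      = ∑ t' : α, ∑ t'' : α, ∑ i : β, ∑ j : β, g i j t' t'' := by
  calc ∑ i : β, ∑ j : β, ∑ t' : α, ∑ t'' : α, g i j t' t''
      = ∑ i : β, ∑ t' : α, ∑ j : β, ∑ t'' : α, g i j t' t'' :=
        Finset.sum_congr rfl fun i _ => Finset.sum_comm
    _ = ∑ t' : α, ∑ i : β, ∑ j : β, ∑ t'' : α, g i j t' t'' := Finset.sum_comm
    _ = ∑ t' : α, ∑ i : β, ∑ t'' : α, ∑ j : β, g i j t' t'' :=
        Finset.sum_congr rfl fun t' _ => Finset.sum_congr rfl fun i _ => Finset.sum_comm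
    _ = ∑ t' : α, ∑ t'' : α, ∑ i : β, ∑ j : β, g i j t' t'' :=
        Finset.sum_congr rfl fun t' _ => Finset.sum_comm

/-- ℓ¹ estimation bound for the CAH delta matrices: if the joint distributions and
both marginals are each estimated within ℓ¹ error ε/3, the average ℓ¹ error of the
delta matrices is at most ε. -/
theorem cah_delta_l1_estimation (m n : ℕ) (hm : 3 ≤ m) (hn : 1 ≤ n) (ε : ℝ) (hε : 0 < ε)
    (P T : Fin m → Fin n → Fin n → ℝ)
    (margLP margRP margLT margRT : Fin m → Fin n → ℝ)
    (hmargLP : ∀ b i, margLP b i = ∑ j, P b i j)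
    (hmargRP : ∀ b j, margRP b j = ∑ i, P b i j)
    (hmargLT : ∀ b i, margLT b i = ∑ j, T b i j)
    (hmargRT : ∀ b j, margRT b j = ∑ i, T b i j)
    (hLPnonneg : ∀ b i, 0 ≤ margLP b i)
    (hRTnonneg : ∀ b j, 0 ≤ margRT b j)
    (hLPsum : ∀ b, ∑ i, margLP b i = 1)
    (hRTsum : ∀ b, ∑ j, margRT b j = 1)
    (Δ : Fin m → Fin n → Fin n → ℝ)
    (hΔ : ∀ b i j, Δ b i j = P b i j -
      (1 / (((m : ℝ) - 1) * ((m : ℝ) - 2))) *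
        ∑ t' : Fin m, ∑ t'' : Fin m,
          if t' ≠ t'' ∧ t' ≠ b ∧ t'' ≠ b then margLP t' i * margRP t'' j else 0)
    (Δhat : Fin m → Fin n → Fin n → ℝ)
    (hΔhat : ∀ b i j, Δhat b i j = T b i j -
      (1 / (((m : ℝ) - 1) * ((m : ℝ) - 2))) *
        ∑ t' : Fin m, ∑ t'' : Fin m,
          if t' ≠ t'' ∧ t' ≠ b ∧ t'' ≠ b then margLT t' i * margRT t'' j else 0)
    (hjoint : ∀ b, ∑ i, ∑ j, |P b i j - T b i j| ≤ ε / 3)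
    (hleft : ∀ b, ∑ i, |margLP b i - margLT b i| ≤ ε / 3)
    (hright : ∀ b, ∑ j, |margRP b j - margRT b j| ≤ ε / 3) :
    (1 / (m : ℝ)) * ∑ b, ∑ i, ∑ j, |Δhat b i j - Δ b i j| ≤ ε := by
  have hm3 : (3 : ℝ) ≤ (m : ℝ) := by exact_mod_cast hm
  have hmpos : (0 : ℝ) < (m : ℝ) := by linarith
  have hden : (0 : ℝ) < ((m : ℝ) - 1) * ((m : ℝ) - 2) := by nlinarith
  have hcpos : (0 : ℝ) ≤ 1 / (((m : ℝ) - 1) * ((m : ℝ) - 2)) := by positivity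
  set c : ℝ := 1 / (((m : ℝ) - 1) * ((m : ℝ) - 2)) with hc
  -- per-pair bound
  have pair : ∀ t' t'' : Fin m,
      ∑ i, ∑ j, |margLT t' i * margRT t'' j - margLP t' i * margRP t'' j| ≤ 2 * ε / 3 := by
    intro t' t''
    have h1 : ∑ i, ∑ j, |margLT t' i * margRT t'' j - margLP t' i * margRP t'' j|
        ≤ ∑ i, ∑ j, (|margLT t' i - margLP t' i| * margRT t'' j
            + margLP t' i * |margRT t'' j - margRP t'' j|) := by
      refine Finset.sum_le_sum fun i _ => Finset.sum_le_sum fun j _ => ?_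
      exact abs_prod_sub' _ _ _ _ (hRTnonneg t'' j) (hLPnonneg t' i)
    have h2 : ∑ i, ∑ j, (|margLT t' i - margLP t' i| * margRT t'' j
            + margLP t' i * |margRT t'' j - margRP t'' j|)
        = (∑ i, |margLT t' i - margLP t' i|) * (∑ j, margRT t'' j)
          + (∑ i, margLP t' i) * (∑ j, |margRT t'' j - margRP t'' j|) := by
      simp only [Finset.sum_add_distrib, ← Finset.sum_mul, ← Finset.mul_sum]
    have hL : ∑ i, |margLT t' i - margLP t' i| ≤ ε / 3 := by
      simpa [abs_sub_comm] using hleft t'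
    have hR : ∑ j, |margRT t'' j - margRP t'' j| ≤ ε / 3 := by
      simpa [abs_sub_comm] using hright t''
    calc ∑ i, ∑ j, |margLT t' i * margRT t'' j - margLP t' i * margRP t'' j|
        ≤ (∑ i, |margLT t' i - margLP t' i|) * (∑ j, margRT t'' j)
          + (∑ i, margLP t' i) * (∑ j, |margRT t'' j - margRP t'' j|) := by
          rw [← h2]; exact h1
      _ = (∑ i, |margLT t' i - margLP t' i|) + (∑ j, |margRT t'' j - margRP t'' j|) := by
          rw [hRTsum t'', hLPsum t', mul_one, one_mul]
      _ ≤ ε / 3 + ε / 3 := add_le_add hL hR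
      _ = 2 * ε / 3 := by ring
  -- counting
  have hcount : ∀ b : Fin m,
      ∑ t' : Fin m, ∑ t'' : Fin m,
        (if t' ≠ t'' ∧ t' ≠ b ∧ t'' ≠ b then (2 * ε / 3) else 0)
      = ((m : ℝ) - 1) * ((m : ℝ) - 2) * (2 * ε / 3) := by
    intro b
    have inner : ∀ t' : Fin m,
        ∑ t'' : Fin m, (if t' ≠ t'' ∧ t' ≠ b ∧ t'' ≠ b then (2 * ε / 3) else 0)
        = if t' ≠ b then ((m : ℝ) - 2) * (2 * ε / 3) else 0 := by
      intro t'
      by_cases ht' : t' = b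
      · simp [ht']
      · rw [if_pos ht']
        rw [← Finset.sum_filter]
        have hfil : Finset.univ.filter (fun t'' : Fin m => t' ≠ t'' ∧ t' ≠ b ∧ t'' ≠ b)
            = (Finset.univ \ {t', b}) := by
          ext x
          simp only [Finset.mem_filter, Finset.mem_univ, true_and, Finset.mem_sdiff,
            Finset.mem_insert, Finset.mem_singleton]
          constructor
          · rintro ⟨h1, _, h3⟩; exact fun h => h.elim (fun hx => h1 hx.symm) h3
          · intro h; push_neg at h
            exact ⟨fun hx => h.1 hx.symm, ht', h.2⟩
        rw [hfil, Finset.sum_const]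
        have hcard : (Finset.univ \ ({t', b} : Finset (Fin m))).card = m - 2 := by
          rw [Finset.card_sdiff_of_subset (Finset.subset_univ _)]
          have : ({t', b} : Finset (Fin m)).card = 2 := by
            rw [Finset.card_insert_of_notMem (by simpa using ht'), Finset.card_singleton]
          simp [this]
        rw [hcard, nsmul_eq_mul]
        have : ((m - 2 : ℕ) : ℝ) = (m : ℝ) - 2 := by
          have : (2 : ℕ) ≤ m := by omega
          push_cast [Nat.cast_sub this]
          ring
        rw [this]
    simp only [inner]
    rw [← Finset.sum_filter]
    have hfil : Finset.univ.filter (fun t' : Fin m => t' ≠ b) = Finset.univ \ {b} := by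
      ext x; simp
    rw [hfil, Finset.sum_const, Finset.card_sdiff_of_subset (Finset.subset_univ _)]
    have hcard : ((Finset.univ : Finset (Fin m)).card - ({b} : Finset (Fin m)).card) = m - 1 := by simp
    rw [hcard, nsmul_eq_mul]
    have : ((m - 1 : ℕ) : ℝ) = (m : ℝ) - 1 := by
      have h1 : (1 : ℕ) ≤ m := by omega
      push_cast [Nat.cast_sub h1]; ring
    rw [this]; ring
  -- per-b bound
  have key : ∀ b : Fin m, ∑ i, ∑ j, |Δhat b i j - Δ b i j| ≤ ε := by
    intro b
    have point : ∀ i j : Fin n, |Δhat b i j - Δ b i j|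
        ≤ |T b i j - P b i j| + c * ∑ t' : Fin m, ∑ t'' : Fin m,
            (if t' ≠ t'' ∧ t' ≠ b ∧ t'' ≠ b then
              |margLT t' i * margRT t'' j - margLP t' i * margRP t'' j| else 0) := by
      intro i j
      rw [hΔhat, hΔ]
      have hdiff : (T b i j -
          c * ∑ t' : Fin m, ∑ t'' : Fin m,
            (if t' ≠ t'' ∧ t' ≠ b ∧ t'' ≠ b then margLT t' i * margRT t'' j else 0)) -
          (P b i j -
          c * ∑ t' : Fin m, ∑ t'' : Fin m,
            (if t' ≠ t'' ∧ t' ≠ b ∧ t'' ≠ b then margLP t' i * margRP t'' j else 0))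
          = (T b i j - P b i j) -
            c * ∑ t' : Fin m, ∑ t'' : Fin m,
              (if t' ≠ t'' ∧ t' ≠ b ∧ t'' ≠ b then
                margLT t' i * margRT t'' j - margLP t' i * margRP t'' j else 0) := by
        rw [sub_sub_sub_comm]
        congr 1
        rw [← mul_sub, ← Finset.sum_sub_distrib]
        congr 1
        refine Finset.sum_congr rfl fun t' _ => ?_
        rw [← Finset.sum_sub_distrib]
        refine Finset.sum_congr rfl fun t'' _ => ?_
        by_cases h : t' ≠ t'' ∧ t' ≠ b ∧ t'' ≠ b <;> simp [h]
      rw [hdiff]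
      calc |(T b i j - P b i j) - c * ∑ t' : Fin m, ∑ t'' : Fin m,
              (if t' ≠ t'' ∧ t' ≠ b ∧ t'' ≠ b then
                margLT t' i * margRT t'' j - margLP t' i * margRP t'' j else 0)|
          ≤ |T b i j - P b i j| + |c * ∑ t' : Fin m, ∑ t'' : Fin m,
              (if t' ≠ t'' ∧ t' ≠ b ∧ t'' ≠ b then
                margLT t' i * margRT t'' j - margLP t' i * margRP t'' j else 0)| :=
            abs_sub _ _
        _ ≤ |T b i j - P b i j| + c * ∑ t' : Fin m, ∑ t'' : Fin m,
              (if t' ≠ t'' ∧ t' ≠ b ∧ t'' ≠ b then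
                |margLT t' i * margRT t'' j - margLP t' i * margRP t'' j| else 0) := by
            gcongr
            rw [abs_mul, abs_of_nonneg hcpos]
            gcongr
            calc |∑ t' : Fin m, ∑ t'' : Fin m, _|
                ≤ ∑ t' : Fin m, |∑ t'' : Fin m, (if t' ≠ t'' ∧ t' ≠ b ∧ t'' ≠ b then
                    margLT t' i * margRT t'' j - margLP t' i * margRP t'' j else 0)| :=
                  Finset.abs_sum_le_sum_abs _ _
              _ ≤ ∑ t' : Fin m, ∑ t'' : Fin m, (if t' ≠ t'' ∧ t' ≠ b ∧ t'' ≠ b then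
                    |margLT t' i * margRT t'' j - margLP t' i * margRP t'' j| else 0) := by
                  refine Finset.sum_le_sum fun t' _ => ?_
                  calc |∑ t'' : Fin m, _| ≤ ∑ t'' : Fin m, |(if t' ≠ t'' ∧ t' ≠ b ∧ t'' ≠ b then
                        margLT t' i * margRT t'' j - margLP t' i * margRP t'' j else 0)| :=
                      Finset.abs_sum_le_sum_abs _ _
                    _ = _ := by
                      refine Finset.sum_congr rfl fun t'' _ => ?_
                      by_cases h : t' ≠ t'' ∧ t' ≠ b ∧ t'' ≠ b <;> simp [h]
    calc ∑ i, ∑ j, |Δhat b i j - Δ b i j|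
        ≤ ∑ i, ∑ j, (|T b i j - P b i j| + c * ∑ t' : Fin m, ∑ t'' : Fin m,
            (if t' ≠ t'' ∧ t' ≠ b ∧ t'' ≠ b then
              |margLT t' i * margRT t'' j - margLP t' i * margRP t'' j| else 0)) := by
          exact Finset.sum_le_sum fun i _ => Finset.sum_le_sum fun j _ => point i j
      _ = (∑ i, ∑ j, |T b i j - P b i j|) + c * ∑ t' : Fin m, ∑ t'' : Fin m,
            ∑ i, ∑ j, (if t' ≠ t'' ∧ t' ≠ b ∧ t'' ≠ b then
              |margLT t' i * margRT t'' j - margLP t' i * margRP t'' j| else 0) := by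
          have e1 : ∑ i, ∑ j, (|T b i j - P b i j| + c * ∑ t' : Fin m, ∑ t'' : Fin m,
              (if t' ≠ t'' ∧ t' ≠ b ∧ t'' ≠ b then
                |margLT t' i * margRT t'' j - margLP t' i * margRP t'' j| else 0))
              = (∑ i, ∑ j, |T b i j - P b i j|) + c * ∑ i, ∑ j, ∑ t' : Fin m, ∑ t'' : Fin m,
                (if t' ≠ t'' ∧ t' ≠ b ∧ t'' ≠ b then
                  |margLT t' i * margRT t'' j - margLP t' i * margRP t'' j| else 0) := by
            simp only [Finset.sum_add_distrib, Finset.mul_sum]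
          rw [e1, sum_swap4]
      _ ≤ ε / 3 + c * (((m : ℝ) - 1) * ((m : ℝ) - 2) * (2 * ε / 3)) := by
          gcongr
          · simpa [abs_sub_comm] using hjoint b
          · rw [← hcount b]
            refine Finset.sum_le_sum fun t' _ => Finset.sum_le_sum fun t'' _ => ?_
            by_cases h : t' ≠ t'' ∧ t' ≠ b ∧ t'' ≠ b
            · simp only [if_pos h]
              exact pair t' t''
            · simp [h]
      _ = ε := by
          rw [hc]
          rw [one_div, inv_mul_cancel_left₀ hden.ne']
          ring
  have hsum : ∑ b, ∑ i, ∑ j, |Δhat b i j - Δ b i j| ≤ (m : ℝ) * ε := by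
    calc ∑ b, ∑ i, ∑ j, |Δhat b i j - Δ b i j| ≤ ∑ _b : Fin m, ε :=
          Finset.sum_le_sum fun b _ => key b
      _ = (m : ℝ) * ε := by
          rw [Finset.sum_const, Finset.card_univ, Fintype.card_fin, nsmul_eq_mul]
  calc (1 / (m : ℝ)) * ∑ b, ∑ i, ∑ j, |Δhat b i j - Δ b i j|
      ≤ (1 / (m : ℝ)) * ((m : ℝ) * ε) :=
        mul_le_mul_of_nonneg_left hsum (by positivity)
    _ = ε := by field_simp
end

section
/- (Deterministic core of Theorem 3: approximate informed truthfulness of CAHR.) Fix m ≥ 3, n ≥ 1 and ε > 0. Let P_b and T_b be true and estimated joint distributions as in the setting (nonnegative, joints summing to 1, marginals summing to 1) with Δ_b, Δ̂_b the corresponding CAH delta matrices, Ŝ_b(i,j) = 1 if Δ̂_b(i,j) > 0 else 0, and E(Ŝ,F,G) = (1/m) Σ_b Σ_{i,j} Δ_b(i,j) · Ŝ_b(F(i),G(j)). If for every b, Σ_{i,j} |P_b(i,j) − T_b(i,j)| ≤ ε/3 and both marginal ℓ¹ errors Σ_i |P_b(i) − T_b(i)| and Σ_j |P_b'(j) − T_b'(j)|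 are at most ε/3, then for all deterministic strategies F, G : Fin n → Fin n, E(Ŝ,𝕀,𝕀) ≥ E(Ŝ,F,G) − ε. -/
open Finset

theorem pair_count (m : ℕ) (hm : 3 ≤ m) (b : Fin m) (x : ℝ) :
    (∑ t' : Fin m, ∑ t'' : Fin m, if t' ≠ t'' ∧ t' ≠ b ∧ t'' ≠ b then x else 0)
      = ((m:ℝ)-1)*((m:ℝ)-2)*x := by
  have h2m : 2 ≤ m := by omega
  have h1m : 1 ≤ m := by omega
  have hinner : ∀ t' : Fin m, t' ≠ b →
      (∑ t'' : Fin m, if t' ≠ t'' ∧ t' ≠ b ∧ t'' ≠ b then x else 0) = ((m:ℝ)-2)*x := by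
    intro t' ht'
    have heq : ∀ t'' : Fin m, (if t' ≠ t'' ∧ t' ≠ b ∧ t'' ≠ b then x else 0)
        = if t'' ≠ t' ∧ t'' ≠ b then x else 0 := by
      intro t''; by_cases h1 : t'' = t' <;> by_cases h2 : t'' = b <;>
        simp [h1, h2, ht', Ne.symm, eq_comm]
    have hbmem : b ∈ (univ : Finset (Fin m)).erase t' :=
      Finset.mem_erase.mpr ⟨Ne.symm ht', Finset.mem_univ b⟩
    rw [Finset.sum_congr rfl (fun t'' _ => heq t''), ← Finset.sum_filter,
      ← Finset.filter_filter, Finset.filter_ne', Finset.filter_ne',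
      Finset.sum_const, Finset.card_erase_of_mem hbmem,
      Finset.card_erase_of_mem (Finset.mem_univ t'), Finset.card_univ, Fintype.card_fin,
      nsmul_eq_mul, Nat.sub_sub, Nat.cast_sub h2m]
    norm_num
  have houter : ∀ t' : Fin m,
      (∑ t'' : Fin m, if t' ≠ t'' ∧ t' ≠ b ∧ t'' ≠ b then x else 0)
        = if t' ≠ b then ((m:ℝ)-2)*x else 0 := by
    intro t'
    by_cases ht' : t' = b
    · simp [ht']
    · rw [hinner t' ht', if_pos ht']
  rw [Finset.sum_congr rfl (fun t' _ => houter t'), ← Finset.sum_filter,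
    Finset.filter_ne', Finset.sum_const,
    Finset.card_erase_of_mem (Finset.mem_univ b), Finset.card_univ, Fintype.card_fin,
    nsmul_eq_mul, Nat.cast_sub h1m]
  push_cast
  ring

theorem swap4 {ι κ : Type*} [Fintype ι] [Fintype κ] (f : ι → ι → κ → κ → ℝ) :
    ∑ i, ∑ j, ∑ a, ∑ b, f i j a b = ∑ a, ∑ b, ∑ i, ∑ j, f i j a b := by
  calc ∑ i, ∑ j, ∑ a, ∑ b, f i j a b
      = ∑ i, ∑ a, ∑ j, ∑ b, f i j a b :=
        Finset.sum_congr rfl (fun i _ => Finset.sum_comm)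
    _ = ∑ a, ∑ i, ∑ j, ∑ b, f i j a b := Finset.sum_comm
    _ = ∑ a, ∑ i, ∑ b, ∑ j, f i j a b :=
        Finset.sum_congr rfl (fun a _ => Finset.sum_congr rfl (fun i _ => Finset.sum_comm))
    _ = ∑ a, ∑ b, ∑ i, ∑ j, f i j a b :=
        Finset.sum_congr rfl (fun a _ => Finset.sum_comm)

/-- Deterministic core of Theorem 3: approximate informed truthfulness of CAHR.
If the estimated joint and marginal distributions are each within ℓ¹ error ε/3 of the
truth, truthful reporting is within ε of optimal under the estimated score matrices. -/
theorem cahr_approx_informed_truthful (m n : ℕ) (hm : 3 ≤ m) (hn : 1 ≤ n)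
    (ε : ℝ) (hε : 0 < ε)
    (P T : Fin m → Fin n → Fin n → ℝ)
    (hPnonneg : ∀ b i j, 0 ≤ P b i j)
    (hPsum : ∀ b, ∑ i, ∑ j, P b i j = 1)
    (hTnonneg : ∀ b i j, 0 ≤ T b i j)
    (hTsum : ∀ b, ∑ i, ∑ j, T b i j = 1)
    (margLP margRP margLT margRT : Fin m → Fin n → ℝ)
    (hmargLP : ∀ b i, margLP b i = ∑ j, P b i j)
    (hmargRP : ∀ b j, margRP b j = ∑ i, P b i j)
    (hmargLT : ∀ b i, margLT b i = ∑ j, T b i j)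
    (hmargRT : ∀ b j, margRT b j = ∑ i, T b i j)
    (Δ : Fin m → Fin n → Fin n → ℝ)
    (hΔ : ∀ b i j, Δ b i j = P b i j -
      (1 / (((m : ℝ) - 1) * ((m : ℝ) - 2))) *
        ∑ t' : Fin m, ∑ t'' : Fin m,
          if t' ≠ t'' ∧ t' ≠ b ∧ t'' ≠ b then margLP t' i * margRP t'' j else 0)
    (Δhat : Fin m → Fin n → Fin n → ℝ)
    (hΔhat : ∀ b i j, Δhat b i j = T b i j -
      (1 / (((m : ℝ) - 1) * ((m : ℝ) - 2))) *
        ∑ t' : Fin m, ∑ t'' : Fin m,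
          if t' ≠ t'' ∧ t' ≠ b ∧ t'' ≠ b then margLT t' i * margRT t'' j else 0)
    (Shat : Fin m → Fin n → Fin n → ℝ)
    (hShat : ∀ b i j, Shat b i j = if 0 < Δhat b i j then 1 else 0)
    (E : (Fin n → Fin n) → (Fin n → Fin n) → ℝ)
    (hE : ∀ F G, E F G =
      (1 / (m : ℝ)) * ∑ b, ∑ i, ∑ j, Δ b i j * Shat b (F i) (G j))
    (hjoint : ∀ b, ∑ i, ∑ j, |P b i j - T b i j| ≤ ε / 3)
    (hleft : ∀ b, ∑ i, |margLP b i - margLT b i| ≤ ε / 3)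
    (hright : ∀ b, ∑ j, |margRP b j - margRT b j| ≤ ε / 3) :
    ∀ F G : Fin n → Fin n, E id id ≥ E F G - ε := by
  intro F G
  have hmR : (3:ℝ) ≤ (m:ℝ) := by exact_mod_cast hm
  set c : ℝ := 1 / (((m : ℝ) - 1) * ((m : ℝ) - 2)) with hc
  have hden : 0 < ((m : ℝ) - 1) * ((m : ℝ) - 2) := by nlinarith
  have hc0 : 0 < c := by positivity
  -- marginal sums
  have hsumRP : ∀ t : Fin m, ∑ j, margRP t j = 1 := by
    intro t
    simp_rw [hmargRP]
    rw [Finset.sum_comm]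
    exact hPsum t
  have hsumLT : ∀ t : Fin m, ∑ i, margLT t i = 1 := by
    intro t
    simp_rw [hmargLT]
    exact hTsum t
  have hRPnn : ∀ t j, 0 ≤ margRP t j := by
    intro t j; rw [hmargRP]; exact Finset.sum_nonneg fun i _ => hPnonneg t i j
  have hLTnn : ∀ t i, 0 ≤ margLT t i := by
    intro t i; rw [hmargLT]; exact Finset.sum_nonneg fun j _ => hTnonneg t i j
  -- per-pair l1 bound
  have pair : ∀ t' t'' : Fin m,
      ∑ i, ∑ j, |margLP t' i * margRP t'' j - margLT t' i * margRT t'' j| ≤ 2 * ε / 3 := by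
    intro t' t''
    have hpt : ∀ i j, |margLP t' i * margRP t'' j - margLT t' i * margRT t'' j|
        ≤ |margLP t' i - margLT t' i| * margRP t'' j
          + margLT t' i * |margRP t'' j - margRT t'' j| := by
      intro i j
      have h : margLP t' i * margRP t'' j - margLT t' i * margRT t'' j
          = (margLP t' i - margLT t' i) * margRP t'' j
            + margLT t' i * (margRP t'' j - margRT t'' j) := by ring
      calc |margLP t' i * margRP t'' j - margLT t' i * margRT t'' j|
          ≤ |(margLP t' i - margLT t' i) * margRP t'' j|
            + |margLT t' i * (margRP t'' j - margRT t'' j)| := by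
            rw [h]; exact abs_add_le _ _
        _ = |margLP t' i - margLT t' i| * margRP t'' j
            + margLT t' i * |margRP t'' j - margRT t'' j| := by
            rw [abs_mul, abs_mul, abs_of_nonneg (hRPnn t'' j), abs_of_nonneg (hLTnn t' i)]
    calc ∑ i, ∑ j, |margLP t' i * margRP t'' j - margLT t' i * margRT t'' j|
        ≤ ∑ i, ∑ j, (|margLP t' i - margLT t' i| * margRP t'' j
            + margLT t' i * |margRP t'' j - margRT t'' j|) :=
          Finset.sum_le_sum fun i _ => Finset.sum_le_sum fun j _ => hpt i j
      _ = (∑ i, |margLP t' i - margLT t' i|) * (∑ j, margRP t'' j)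
            + (∑ i, margLT t' i) * (∑ j, |margRP t'' j - margRT t'' j|) := by
          simp_rw [Finset.sum_add_distrib, ← Finset.mul_sum, ← Finset.sum_mul]
      _ ≤ (ε/3) * 1 + 1 * (ε/3) := by
          rw [hsumRP t'', hsumLT t']
          have h1 := hleft t'
          have h2 := hright t''
          nlinarith [Finset.sum_nonneg (fun i (_ : i ∈ (univ: Finset (Fin n))) =>
            abs_nonneg (margLP t' i - margLT t' i))]
      _ = 2 * ε / 3 := by ring
  -- key: per-b l1 distance between Δ and Δhat
  have key : ∀ b, ∑ i, ∑ j, |Δ b i j - Δhat b i j| ≤ ε := by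
    intro b
    have hpt : ∀ i j, |Δ b i j - Δhat b i j| ≤ |P b i j - T b i j|
        + c * ∑ t' : Fin m, ∑ t'' : Fin m,
            if t' ≠ t'' ∧ t' ≠ b ∧ t'' ≠ b then
              |margLP t' i * margRP t'' j - margLT t' i * margRT t'' j| else 0 := by
      intro i j
      have hdiff : Δ b i j - Δhat b i j = (P b i j - T b i j)
          - c * ∑ t' : Fin m, ∑ t'' : Fin m,
              if t' ≠ t'' ∧ t' ≠ b ∧ t'' ≠ b then
                margLP t' i * margRP t'' j - margLT t' i * margRT t'' j else 0 := by
        rw [hΔ, hΔhat]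
        have hS : (∑ t' : Fin m, ∑ t'' : Fin m,
              if t' ≠ t'' ∧ t' ≠ b ∧ t'' ≠ b then
                margLP t' i * margRP t'' j - margLT t' i * margRT t'' j else 0)
            = (∑ t' : Fin m, ∑ t'' : Fin m,
                if t' ≠ t'' ∧ t' ≠ b ∧ t'' ≠ b then margLP t' i * margRP t'' j else 0)
              - (∑ t' : Fin m, ∑ t'' : Fin m,
                if t' ≠ t'' ∧ t' ≠ b ∧ t'' ≠ b then margLT t' i * margRT t'' j else 0) := by
          rw [← Finset.sum_sub_distrib]
          refine Finset.sum_congr rfl fun t' _ => ?_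
          rw [← Finset.sum_sub_distrib]
          refine Finset.sum_congr rfl fun t'' _ => ?_
          split_ifs <;> simp
        rw [hS]
        ring
      rw [hdiff]
      have habs : |c * ∑ t' : Fin m, ∑ t'' : Fin m,
          if t' ≠ t'' ∧ t' ≠ b ∧ t'' ≠ b then
            margLP t' i * margRP t'' j - margLT t' i * margRT t'' j else 0|
          ≤ c * ∑ t' : Fin m, ∑ t'' : Fin m,
            if t' ≠ t'' ∧ t' ≠ b ∧ t'' ≠ b then
              |margLP t' i * margRP t'' j - margLT t' i * margRT t'' j| else 0 := by
        rw [abs_mul, abs_of_pos hc0]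
        refine mul_le_mul_of_nonneg_left ?_ hc0.le
        calc |∑ t' : Fin m, ∑ t'' : Fin m, _|
            ≤ ∑ t' : Fin m, |∑ t'' : Fin m, if t' ≠ t'' ∧ t' ≠ b ∧ t'' ≠ b then
                margLP t' i * margRP t'' j - margLT t' i * margRT t'' j else 0| :=
              Finset.abs_sum_le_sum_abs _ _
          _ ≤ ∑ t' : Fin m, ∑ t'' : Fin m, if t' ≠ t'' ∧ t' ≠ b ∧ t'' ≠ b then
                |margLP t' i * margRP t'' j - margLT t' i * margRT t'' j| else 0 := by
              refine Finset.sum_le_sum fun t' _ => ?_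
              calc |∑ t'' : Fin m, _| ≤ ∑ t'' : Fin m, |if t' ≠ t'' ∧ t' ≠ b ∧ t'' ≠ b then
                    margLP t' i * margRP t'' j - margLT t' i * margRT t'' j else 0| :=
                  Finset.abs_sum_le_sum_abs _ _
                _ ≤ _ := by
                  refine Finset.sum_le_sum fun t'' _ => ?_
                  split_ifs <;> simp
      calc |(P b i j - T b i j) - c * _| ≤ |P b i j - T b i j| + |c * _| := abs_sub _ _
        _ ≤ _ := by exact add_le_add (le_refl _) habs
    calc ∑ i, ∑ j, |Δ b i j - Δhat b i j|
        ≤ ∑ i, ∑ j, (|P b i j - T b i j|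
          + c * ∑ t' : Fin m, ∑ t'' : Fin m,
            if t' ≠ t'' ∧ t' ≠ b ∧ t'' ≠ b then
              |margLP t' i * margRP t'' j - margLT t' i * margRT t'' j| else 0) :=
          Finset.sum_le_sum fun i _ => Finset.sum_le_sum fun j _ => hpt i j
      _ = (∑ i, ∑ j, |P b i j - T b i j|)
          + c * ∑ i, ∑ j, ∑ t' : Fin m, ∑ t'' : Fin m,
            if t' ≠ t'' ∧ t' ≠ b ∧ t'' ≠ b then
              |margLP t' i * margRP t'' j - margLT t' i * margRT t'' j| else 0 := by
          simp_rw [Finset.sum_add_distrib, ← Finset.mul_sum]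
      _ = (∑ i, ∑ j, |P b i j - T b i j|)
          + c * ∑ t' : Fin m, ∑ t'' : Fin m,
            if t' ≠ t'' ∧ t' ≠ b ∧ t'' ≠ b then
              (∑ i, ∑ j, |margLP t' i * margRP t'' j - margLT t' i * margRT t'' j|) else 0 := by
          congr 1
          congr 1
          rw [swap4]
          refine Finset.sum_congr rfl fun t' _ => Finset.sum_congr rfl fun t'' _ => ?_
          split_ifs <;> simp
      _ ≤ ε/3 + c * ∑ t' : Fin m, ∑ t'' : Fin m,
            if t' ≠ t'' ∧ t' ≠ b ∧ t'' ≠ b then (2 * ε / 3) else 0 := by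
          refine add_le_add (hjoint b) (mul_le_mul_of_nonneg_left ?_ hc0.le)
          refine Finset.sum_le_sum fun t' _ => Finset.sum_le_sum fun t'' _ => ?_
          split_ifs with h
          · exact pair t' t''
          · exact le_rfl
      _ = ε/3 + c * (((m:ℝ)-1)*((m:ℝ)-2)*(2*ε/3)) := by rw [pair_count m hm b]
      _ = ε := by
          rw [hc]
          rw [one_div, ← mul_assoc, inv_mul_cancel₀ hden.ne']
          ring
  -- optimality of Shat against Δhat
  have optB : ∀ b i j, Δhat b i j * Shat b (F i) (G j) ≤ Δhat b i j * Shat b i j := by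
    intro b i j
    rw [hShat, hShat]
    split_ifs with h1 h2 <;> simp <;> linarith
  -- Shat differences bounded by 1
  have sbound : ∀ b i j, |Shat b (F i) (G j) - Shat b i j| ≤ 1 := by
    intro b i j
    rw [hShat, hShat]
    split_ifs <;> norm_num
  -- per-b gain bound
  have per_b : ∀ b, (∑ i, ∑ j, Δ b i j * Shat b (F i) (G j))
      - (∑ i, ∑ j, Δ b i j * Shat b i j) ≤ ε := by
    intro b
    have expand : (∑ i, ∑ j, Δ b i j * Shat b (F i) (G j))
        - (∑ i, ∑ j, Δ b i j * Shat b i j)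
        = (∑ i, ∑ j, (Δ b i j - Δhat b i j) * (Shat b (F i) (G j) - Shat b i j))
          + (∑ i, ∑ j, (Δhat b i j * Shat b (F i) (G j) - Δhat b i j * Shat b i j)) := by
      rw [← Finset.sum_sub_distrib, ← Finset.sum_add_distrib]
      refine Finset.sum_congr rfl fun i _ => ?_
      rw [← Finset.sum_sub_distrib, ← Finset.sum_add_distrib]
      exact Finset.sum_congr rfl fun j _ => by ring
    rw [expand]
    have h1 : (∑ i, ∑ j, (Δ b i j - Δhat b i j) * (Shat b (F i) (G j) - Shat b i j))
        ≤ ∑ i, ∑ j, |Δ b i j - Δhat b i j| := by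
      refine Finset.sum_le_sum fun i _ => Finset.sum_le_sum fun j _ => ?_
      calc (Δ b i j - Δhat b i j) * (Shat b (F i) (G j) - Shat b i j)
          ≤ |(Δ b i j - Δhat b i j) * (Shat b (F i) (G j) - Shat b i j)| := le_abs_self _
        _ = |Δ b i j - Δhat b i j| * |Shat b (F i) (G j) - Shat b i j| := abs_mul _ _
        _ ≤ |Δ b i j - Δhat b i j| * 1 :=
            mul_le_mul_of_nonneg_left (sbound b i j) (abs_nonneg _)
        _ = |Δ b i j - Δhat b i j| := mul_one _
    have h2 : (∑ i, ∑ j, (Δhat b i j * Shat b (F i) (G j) - Δhat b i j * Shat b i j)) ≤ 0 := by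
      refine Finset.sum_nonpos fun i _ => Finset.sum_nonpos fun j _ => ?_
      linarith [optB b i j]
    linarith [key b]
  -- assemble
  have hm0 : 0 < (m:ℝ) := by linarith
  rw [ge_iff_le, sub_le_iff_le_add, hE, hE]
  have : (∑ b, ∑ i, ∑ j, Δ b i j * Shat b (F i) (G j))
      ≤ (∑ b, ∑ i, ∑ j, Δ b i j * Shat b (id i) (id j)) + (m:ℝ) * ε := by
    calc (∑ b, ∑ i, ∑ j, Δ b i j * Shat b (F i) (G j))
        ≤ ∑ b : Fin m, ((∑ i, ∑ j, Δ b i j * Shat b i j) + ε) :=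
          Finset.sum_le_sum fun b _ => by linarith [per_b b]
      _ = (∑ b, ∑ i, ∑ j, Δ b i j * Shat b (id i) (id j)) + (m:ℝ) * ε := by
          rw [Finset.sum_add_distrib, Finset.sum_const, Finset.card_univ, Fintype.card_fin,
            nsmul_eq_mul]
          simp
  calc (1 / (m:ℝ)) * ∑ b, ∑ i, ∑ j, Δ b i j * Shat b (F i) (G j)
      ≤ (1 / (m:ℝ)) * ((∑ b, ∑ i, ∑ j, Δ b i j * Shat b (id i) (id j)) + (m:ℝ) * ε) :=
        mul_le_mul_of_nonneg_left this (by positivity)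
    _ = (1 / (m:ℝ)) * (∑ b, ∑ i, ∑ j, Δ b i j * Shat b (id i) (id j)) + ε := by
        field_simp
end
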